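/- For nonnegative coefficients α, β : ℤ → ℝ and sequences f : ℤ → ℝ, W : ℤ → ℝ with W_i > 0 for all i, the carré du champ comparison Γ^h(f²/W, W)_i ≤ Γ^h(f, f)_i holds for every i ∈ ℤ. -/
import Mathlib

lemma key (a b x y : ℝ) (ha : 0 < a) (hb : 0 < b) :
    (x^2 / a - y^2 / b) * (a - b) ≤ (x - y)^2 := by
  have h : (x - y)^2 - (x^2 / a - y^2 / b) * (a - b) = (x * b - y * a)^2 / (a * b) := by
    field_simp; ring
  nlinarith [sq_nonneg (x * b - y * a), div_nonneg (sq_nonneg (x * b - y * a)) (mul_pos ha hb).le]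

/-- Carré du champ comparison: `Γ^h(f²/W, W)_i ≤ Γ^h(f,f)_i` for positive `W` and
nonnegative coefficients. -/
theorem carre_du_champ_comparison (α β : ℤ → ℝ)
    (hα : ∀ i, 0 ≤ α i) (hβ : ∀ i, 0 ≤ β i)
    (f W : ℤ → ℝ) (hW : ∀ i, 0 < W i) (i : ℤ) :
    (1/2) * α i * ((f (i+1))^2 / W (i+1) - (f i)^2 / W i) * (W (i+1) - W i)
      + (1/2) * β i * ((f i)^2 / W i - (f (i-1))^2 / W (i-1)) * (W i - W (i-1))
    ≤ (1/2) * α i * (f (i+1) - f i)^2 + (1/2) * β i * (f i - f (i-1))^2 := by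
  have h1 := key (W (i+1)) (W i) (f (i+1)) (f i) (hW _) (hW _)
  have h2 := key (W i) (W (i-1)) (f i) (f (i-1)) (hW _) (hW _)
  nlinarith [mul_le_mul_of_nonneg_left h1 (hα i), mul_le_mul_of_nonneg_left h2 (hβ i)]
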